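/- arXiv:1903.11135 — 3 statements merged into one kernel-verified Lean document; each statement's English description precedes it below -/
import Mathlib

section
/- Let d ≥ 4 and let Γ = {p₀, p₁, …, p_d} be a collection of d + 1 ≥ 5 distinct points in ℙ²(ℂ). If Γ fails to impose independent linear conditions on plane curves of degree d − 2 (i.e., there exists some point p ∈ Γ such that every homogeneous polynomial of degree d − 2 in three variables vanishing at all points of Γ \ {p} also vanishes at p), then at least d of the points of Γ are collinear. -/
open MvPolynomial

noncomputable def linPoly (L : (Fin 3 → ℂ) →ₗ[ℂ] ℂ) : MvPolynomial (Fin 3) ℂ :=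
  ∑ i, C (L (Pi.single i 1)) * X i

lemma linPoly_homog (L : (Fin 3 → ℂ) →ₗ[ℂ] ℂ) : (linPoly L).IsHomogeneous 1 :=
  MvPolynomial.IsHomogeneous.sum _ _ _ (fun i _ => isHomogeneous_C_mul_X _ i)

lemma eval_linPoly (L : (Fin 3 → ℂ) →ₗ[ℂ] ℂ) (v : Fin 3 → ℂ) :
    MvPolynomial.eval v (linPoly L) = L v := by
  have hv : v = ∑ i, (v i) • (Pi.single i (1 : ℂ) : Fin 3 → ℂ) := by
    funext j
    simp [Finset.sum_apply, Pi.single_apply]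
  conv_rhs => rw [hv]
  rw [map_sum, linPoly, map_sum]
  simp [mul_comm]

lemma exists_dual_sep (W : Submodule ℂ (Fin 3 → ℂ)) {x : Fin 3 → ℂ} (hx : x ∉ W) :
    ∃ L : (Fin 3 → ℂ) →ₗ[ℂ] ℂ, L x ≠ 0 ∧ ∀ w ∈ W, L w = 0 := by
  obtain ⟨f, h1, h2⟩ := W.exists_dual_map_eq_bot_of_notMem hx inferInstance
  refine ⟨f, h1, fun w hw => ?_⟩
  have : f w ∈ W.map f := Submodule.mem_map_of_mem hw
  rwa [h2, Submodule.mem_bot] at this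

abbrev Pt := Projectivization ℂ (Fin 3 → ℂ)

lemma rep_nmem_span_rep {p q : Pt} (h : p ≠ q) :
    p.rep ∉ Submodule.span ℂ ({q.rep} : Set (Fin 3 → ℂ)) := by
  intro hm
  rw [Submodule.mem_span_singleton] at hm
  obtain ⟨a, ha⟩ := hm
  have ha0 : a ≠ 0 := by
    rintro rfl
    rw [zero_smul] at ha
    exact p.rep_nonzero ha.symm
  apply h
  rw [← p.mk_rep, ← q.mk_rep]
  exact (Projectivization.mk_eq_mk_iff ℂ _ _ p.rep_nonzero q.rep_nonzero).mpr
    ⟨Units.mk0 a ha0, ha⟩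

lemma rep_nmem_span_pair {p q r : Pt} (hq : p ≠ q) (hr : p ≠ r)
    (hf : Submodule.span ℂ ({p.rep, q.rep} : Set (Fin 3 → ℂ)) ≠
          Submodule.span ℂ ({p.rep, r.rep} : Set (Fin 3 → ℂ))) :
    p.rep ∉ Submodule.span ℂ ({q.rep, r.rep} : Set (Fin 3 → ℂ)) := by
  intro hm
  rw [Submodule.mem_span_pair] at hm
  obtain ⟨a, b, hab⟩ := hm
  by_cases hb : b = 0
  · subst hb
    rw [zero_smul, add_zero] at hab
    exact rep_nmem_span_rep hq (Submodule.mem_span_singleton.mpr ⟨a, hab⟩)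
  by_cases ha : a = 0
  · subst ha
    rw [zero_smul, zero_add] at hab
    exact rep_nmem_span_rep hr (Submodule.mem_span_singleton.mpr ⟨b, hab⟩)
  apply hf
  have hpq : p.rep ∈ Submodule.span ℂ ({p.rep, q.rep} : Set (Fin 3 → ℂ)) :=
    Submodule.subset_span (by simp)
  have hqq : q.rep ∈ Submodule.span ℂ ({p.rep, q.rep} : Set (Fin 3 → ℂ)) :=
    Submodule.subset_span (by simp)
  have hpr : p.rep ∈ Submodule.span ℂ ({p.rep, r.rep} : Set (Fin 3 → ℂ)) :=
    Submodule.subset_span (by simp)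
  have hrr : r.rep ∈ Submodule.span ℂ ({p.rep, r.rep} : Set (Fin 3 → ℂ)) :=
    Submodule.subset_span (by simp)
  have hq2 : q.rep ∈ Submodule.span ℂ ({p.rep, r.rep} : Set (Fin 3 → ℂ)) := by
    have : q.rep = a⁻¹ • (p.rep - b • r.rep) := by
      rw [← hab, add_sub_cancel_right, smul_smul, inv_mul_cancel₀ ha, one_smul]
    rw [this]
    exact Submodule.smul_mem _ _ (Submodule.sub_mem _ hpr (Submodule.smul_mem _ _ hrr))
  have hr2 : r.rep ∈ Submodule.span ℂ ({p.rep, q.rep} : Set (Fin 3 → ℂ)) := by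
    have : r.rep = b⁻¹ • (p.rep - a • q.rep) := by
      rw [← hab, add_sub_cancel_left, smul_smul, inv_mul_cancel₀ hb, one_smul]
    rw [this]
    exact Submodule.smul_mem _ _ (Submodule.sub_mem _ hpq (Submodule.smul_mem _ _ hqq))
  apply le_antisymm <;> rw [Submodule.span_le, Set.insert_subset_iff, Set.singleton_subset_iff] <;>
    exact ⟨by assumption, by assumption⟩

lemma span_pair_ne_top (a b : Fin 3 → ℂ) :
    Submodule.span ℂ ({a, b} : Set (Fin 3 → ℂ)) ≠ ⊤ := by
  have : Submodule.span ℂ ({a, b} : Set (Fin 3 → ℂ)) < ⊤ := by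
    apply span_lt_top_of_card_lt_finrank
    calc (({a, b} : Set (Fin 3 → ℂ))).toFinset.card ≤ 2 := by
          simp only [Set.toFinset_insert, Set.toFinset_singleton]
          exact (Finset.card_insert_le _ _).trans (by simp)
      _ < Module.finrank ℂ (Fin 3 → ℂ) := by rw [Module.finrank_fin_fun]; omega
  exact this.ne

lemma four_cross_pairs {α β : Type*} [DecidableEq α] [DecidableEq β]
    (S : Finset α) (f : α → β) (n : ℕ) (hn : 2 ≤ n) (hcard : S.card = n + 2)
    (hclass : ∀ b : β, (S.filter (fun a => f a = b)).card ≤ n) :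
    ∃ q1 ∈ S, ∃ q2 ∈ S, ∃ q3 ∈ S, ∃ q4 ∈ S,
      f q1 ≠ f q2 ∧ f q3 ≠ f q4 ∧
      q3 ≠ q1 ∧ q3 ≠ q2 ∧ q4 ≠ q1 ∧ q4 ≠ q2 := by
  have hSne : S.Nonempty := Finset.card_pos.mp (by omega)
  obtain ⟨q1, hq1, hmax⟩ := S.exists_max_image
    (fun a => (S.filter (fun x => f x = f a)).card) hSne
  have hq2ex : ∃ q2 ∈ S, f q2 ≠ f q1 := by
    by_contra hc
    push_neg at hc
    have : S ⊆ S.filter (fun x => f x = f q1) := fun x hx =>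
      Finset.mem_filter.mpr ⟨hx, hc x hx⟩
    have := (Finset.card_le_card this).trans (hclass (f q1))
    omega
  obtain ⟨q2, hq2, hfq2⟩ := hq2ex
  have hq12 : q1 ≠ q2 := fun h => hfq2 (by rw [h])
  set S' := S \ {q1, q2} with hS'
  have hS'card : S'.card = n := by
    rw [hS', Finset.card_sdiff_of_subset (by
      intro x hx; simp only [Finset.mem_insert, Finset.mem_singleton] at hx
      rcases hx with rfl | rfl <;> assumption)]
    rw [Finset.card_insert_of_notMem (by simp [hq12]), Finset.card_singleton, hcard]; omega
  by_cases hex : ∃ q3 ∈ S', ∃ q4 ∈ S', f q3 ≠ f q4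
  · obtain ⟨q3, hq3, q4, hq4, hf34⟩ := hex
    have h3 := Finset.mem_sdiff.mp hq3
    have h4 := Finset.mem_sdiff.mp hq4
    simp only [Finset.mem_insert, Finset.mem_singleton, not_or] at h3 h4
    exact ⟨q1, hq1, q2, hq2, q3, h3.1, q4, h4.1, fun h => hfq2 h.symm, hf34,
      h3.2.1, h3.2.2, h4.2.1, h4.2.2⟩
  · exfalso
    push_neg at hex
    have hS'ne : S'.Nonempty := Finset.card_pos.mp (by omega)
    obtain ⟨c, hc⟩ := hS'ne
    have hcS : c ∈ S := (Finset.mem_sdiff.mp hc).1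
    have hall : ∀ a ∈ S', f a = f c := fun a ha => hex a ha c hc
    have hS'sub : S' ⊆ S.filter (fun x => f x = f c) := fun x hx =>
      Finset.mem_filter.mpr ⟨(Finset.mem_sdiff.mp hx).1, hall x hx⟩
    by_cases h1 : f c = f q1
    · -- S' ∪ {q1} in class f q1
      have hsub : insert q1 S' ⊆ S.filter (fun x => f x = f q1) := by
        intro x hx
        rcases Finset.mem_insert.mp hx with rfl | hx
        · exact Finset.mem_filter.mpr ⟨hq1, rfl⟩
        · exact Finset.mem_filter.mpr ⟨(Finset.mem_sdiff.mp hx).1, (hall x hx).trans h1⟩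
      have hq1notS' : q1 ∉ S' := by simp [hS']
      have := (Finset.card_le_card hsub).trans (hclass (f q1))
      rw [Finset.card_insert_of_notMem hq1notS'] at this
      omega
    by_cases h2 : f c = f q2
    · have hsub : insert q2 S' ⊆ S.filter (fun x => f x = f q2) := by
        intro x hx
        rcases Finset.mem_insert.mp hx with rfl | hx
        · exact Finset.mem_filter.mpr ⟨hq2, rfl⟩
        · exact Finset.mem_filter.mpr ⟨(Finset.mem_sdiff.mp hx).1, (hall x hx).trans h2⟩
      have hq2notS' : q2 ∉ S' := by simp [hS']
      have := (Finset.card_le_card hsub).trans (hclass (f q2))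
      rw [Finset.card_insert_of_notMem hq2notS'] at this
      omega
    · -- class(f q1) ≥ class(f c) ≥ n, plus q2 elsewhere
      have hc_card : n ≤ (S.filter (fun x => f x = f c)).card := by
        have := Finset.card_le_card hS'sub
        omega
      have hq1_card : n ≤ (S.filter (fun x => f x = f q1)).card :=
        hc_card.trans (hmax c hcS)
      have hdisj : Disjoint (S.filter (fun x => f x = f c))
          (S.filter (fun x => f x = f q1)) := by
        rw [Finset.disjoint_filter]
        intro x _ hx hx'
        exact h1 (hx ▸ hx')
      have hq2mem : q2 ∉ (S.filter (fun x => f x = f c)) ∪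
          (S.filter (fun x => f x = f q1)) := by
        simp only [Finset.mem_union, Finset.mem_filter, not_or]
        exact ⟨fun h => h2 h.2.symm, fun h => hfq2 h.2⟩
      have hsub : insert q2 ((S.filter (fun x => f x = f c)) ∪
          (S.filter (fun x => f x = f q1))) ⊆ S := by
        intro x hx
        rcases Finset.mem_insert.mp hx with rfl | hx
        · exact hq2
        · rcases Finset.mem_union.mp hx with hx | hx <;>
            exact (Finset.mem_filter.mp hx).1
      have := Finset.card_le_card hsub
      rw [Finset.card_insert_of_notMem hq2mem, Finset.card_union_of_disjoint hdisj] at this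
      omega

section
open Finset


section
open Finset

/-- If `d + 1 ≥ 5` distinct points in `ℙ²(ℂ)` fail to impose independent
linear conditions on plane curves of degree `d - 2`, then at least `d` of the points
are collinear. -/
theorem points_fail_independent_conditions_degree_sub_two_collinear
    (d : ℕ) (hd : 4 ≤ d)
    (Γ : Finset (Projectivization ℂ (Fin 3 → ℂ))) (hΓ : Γ.card = d + 1)
    (hfail : ∃ p ∈ Γ, ∀ F : MvPolynomial (Fin 3) ℂ, F.IsHomogeneous (d - 2) →
      (∀ q ∈ Γ, q ≠ p → MvPolynomial.eval q.rep F = 0) →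
      MvPolynomial.eval p.rep F = 0) :
    ∃ L : (Fin 3 → ℂ) →ₗ[ℂ] ℂ, L ≠ 0 ∧
      ∃ S : Finset (Projectivization ℂ (Fin 3 → ℂ)), S ⊆ Γ ∧ d ≤ S.card ∧
        ∀ q ∈ S, L q.rep = 0 := by
  classical
  by_contra hcon
  push_neg at hcon
  obtain ⟨p, hpΓ, hp⟩ := hfail
  set S : Finset (Projectivization ℂ (Fin 3 → ℂ)) := Γ.erase p with hSdef
  have hScard : S.card = d := by
    rw [hSdef, Finset.card_erase_of_mem hpΓ, hΓ]; omega
  have hSne : ∀ q ∈ S, q ≠ p := fun q hq => Finset.ne_of_mem_erase hq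
  have hSΓ : ∀ q ∈ S, q ∈ Γ := fun q hq => Finset.mem_of_mem_erase hq
  set f : Projectivization ℂ (Fin 3 → ℂ) → Submodule ℂ (Fin 3 → ℂ) :=
    fun q => Submodule.span ℂ ({p.rep, q.rep} : Set (Fin 3 → ℂ)) with hfdef
  -- class size bound
  have hclass : ∀ b, (S.filter (fun a => f a = b)).card ≤ d - 2 := by
    intro b
    rcases (S.filter (fun a => f a = b)).eq_empty_or_nonempty with he | ⟨q, hq⟩
    · rw [he]; simp
    · obtain ⟨hqS, hfq⟩ := Finset.mem_filter.mp hq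
      obtain ⟨x, hx⟩ : ∃ x, x ∉ f q := by
        by_contra hc
        push_neg at hc
        exact span_pair_ne_top p.rep q.rep (Submodule.eq_top_iff'.mpr hc)
      obtain ⟨L, hL1, hL2⟩ := exists_dual_sep (f q) hx
      have hL0 : L ≠ 0 := fun h => hL1 (by rw [h]; rfl)
      set T := insert p (S.filter (fun a => f a = b)) with hTdef
      have hTsub : T ⊆ Γ := by
        intro r hr
        rcases Finset.mem_insert.mp hr with rfl | hr
        · exact hpΓ
        · exact hSΓ r (Finset.mem_filter.mp hr).1
      have hTzero : ∀ r ∈ T, L r.rep = 0 := by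
        intro r hr
        rcases Finset.mem_insert.mp hr with rfl | hr
        · exact hL2 _ (Submodule.subset_span (by simp))
        · obtain ⟨hrS, hfr⟩ := Finset.mem_filter.mp hr
          apply hL2
          have hrq : f r = f q := by rw [hfr, hfq]
          have hmem : r.rep ∈ f r := Submodule.subset_span (by simp)
          rwa [hrq] at hmem
      have hTcard : ¬ d ≤ T.card := by
        intro hle
        obtain ⟨r, hrT, hrL⟩ := hcon L hL0 T hTsub hle
        exact hrL (hTzero r hrT)
      have hpT : p ∉ S.filter (fun a => f a = b) := fun h =>
        (Finset.mem_erase.mp (Finset.mem_filter.mp h).1).1 rfl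
      rw [hTdef, Finset.card_insert_of_notMem hpT] at hTcard
      omega
  -- get the two cross-class pairs
  obtain ⟨q1, hq1, q2, hq2, q3, hq3, q4, hq4, hf12, hf34, h31, h32, h41, h42⟩ :=
    four_cross_pairs S f (d - 2) (by omega) (by omega) hclass
  have h12 : q1 ≠ q2 := fun h => hf12 (by rw [h])
  have h34 : q3 ≠ q4 := fun h => hf34 (by rw [h])
  -- linear forms for the two pair-lines
  obtain ⟨L1, hL1p, hL1z⟩ := exists_dual_sep
    (Submodule.span ℂ ({q1.rep, q2.rep} : Set (Fin 3 → ℂ)))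
    (rep_nmem_span_pair (hSne q1 hq1).symm (hSne q2 hq2).symm hf12)
  obtain ⟨L2, hL2p, hL2z⟩ := exists_dual_sep
    (Submodule.span ℂ ({q3.rep, q4.rep} : Set (Fin 3 → ℂ)))
    (rep_nmem_span_pair (hSne q3 hq3).symm (hSne q4 hq4).symm hf34)
  -- remaining points, each with its own line
  set Q : Finset (Projectivization ℂ (Fin 3 → ℂ)) := {q1, q2, q3, q4} with hQdef
  have hQsub : Q ⊆ S := by
    intro x hx
    simp only [hQdef, Finset.mem_insert, Finset.mem_singleton] at hx
    rcases hx with rfl | rfl | rfl | rfl <;> assumption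
  have hQcard : Q.card = 4 := by
    rw [hQdef]
    rw [Finset.card_insert_of_notMem (by simp [h12, h31.symm, h41.symm]),
        Finset.card_insert_of_notMem (by simp [h32.symm, h42.symm]),
        Finset.card_insert_of_notMem (by simp [h34]),
        Finset.card_singleton]
  set S'' := S \ Q with hS''def
  have hS''card : S''.card = d - 4 := by
    rw [hS''def, Finset.card_sdiff_of_subset hQsub, hScard, hQcard]
  have hsingle : ∀ q ∈ S'', ∃ L : (Fin 3 → ℂ) →ₗ[ℂ] ℂ, L p.rep ≠ 0 ∧ L q.rep = 0 := by
    intro q hq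
    have hqS : q ∈ S := (Finset.mem_sdiff.mp hq).1
    obtain ⟨L, h1, h2⟩ := exists_dual_sep (Submodule.span ℂ ({q.rep} : Set (Fin 3 → ℂ)))
      (rep_nmem_span_rep (hSne q hqS).symm)
    exact ⟨L, h1, h2 _ (Submodule.mem_span_singleton_self _)⟩
  choose g hg1 hg2 using hsingle
  -- the polynomial
  set F : MvPolynomial (Fin 3) ℂ :=
    linPoly L1 * (linPoly L2 * ∏ q ∈ S''.attach, linPoly (g q.1 q.2)) with hFdef
  have hFhom : F.IsHomogeneous (d - 2) := by
    have hprod : (∏ q ∈ S''.attach, linPoly (g q.1 q.2)).IsHomogeneous (d - 4) := by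
      have := MvPolynomial.IsHomogeneous.prod S''.attach
        (fun q => linPoly (g q.1 q.2)) (fun _ => 1)
        (fun i _ => linPoly_homog _)
      have hsum : ∑ _i ∈ S''.attach, (1 : ℕ) = d - 4 := by
        rw [Finset.sum_const, smul_eq_mul, mul_one, Finset.card_attach, hS''card]
      rwa [hsum] at this
    have := (linPoly_homog L1).mul ((linPoly_homog L2).mul hprod)
    have heq : 1 + (1 + (d - 4)) = d - 2 := by omega
    rwa [heq] at this
  have hFzero : ∀ q ∈ Γ, q ≠ p → MvPolynomial.eval q.rep F = 0 := by
    intro q hqΓ hqp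
    have hqS : q ∈ S := Finset.mem_erase.mpr ⟨hqp, hqΓ⟩
    rw [hFdef, map_mul, map_mul, map_prod, eval_linPoly, eval_linPoly]
    by_cases h1 : q = q1
    · subst h1; rw [hL1z _ (Submodule.subset_span (by simp)), zero_mul]
    by_cases h2 : q = q2
    · subst h2; rw [hL1z _ (Submodule.subset_span (by simp)), zero_mul]
    by_cases h3 : q = q3
    · subst h3; rw [hL2z _ (Submodule.subset_span (by simp)), zero_mul, mul_zero]
    by_cases h4 : q = q4
    · subst h4; rw [hL2z _ (Submodule.subset_span (by simp)), zero_mul, mul_zero]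
    · have hqS'' : q ∈ S'' := Finset.mem_sdiff.mpr ⟨hqS, by
        simp only [hQdef, Finset.mem_insert, Finset.mem_singleton]
        push_neg
        exact ⟨h1, h2, h3, h4⟩⟩
      have : (∏ r ∈ S''.attach, MvPolynomial.eval q.rep (linPoly (g r.1 r.2))) = 0 := by
        apply Finset.prod_eq_zero (Finset.mem_attach _ (⟨q, hqS''⟩ : {x // x ∈ S''}))
        rw [eval_linPoly]
        exact hg2 q hqS''
      rw [this, mul_zero, mul_zero]
  have := hp F hFhom hFzero
  rw [hFdef, map_mul, map_mul, map_prod, eval_linPoly, eval_linPoly] at this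
  refine absurd this (mul_ne_zero hL1p (mul_ne_zero hL2p ?_))
  rw [Finset.prod_ne_zero_iff]
  intro q _
  rw [eval_linPoly]
  exact hg1 q.1 q.2

end
end
end

section
/- Let p₀ ∈ ℙ²(ℂ) and let S be a finite set of n ≥ 2 points of ℙ²(ℂ) with p₀ ∉ S, such that every projective line through p₀ contains at most one point of S (i.e., no two distinct points of S are collinear with p₀). Then there exists a homogeneous polynomial F of degree ⌈n/2⌉ in ℂ[X₀, X₁, X₂] that vanishes at every point of S but does not vanish at p₀. -/
open MvPolynomial

noncomputable def lpoly (L : (Fin 3 → ℂ) →ₗ[ℂ] ℂ) : MvPolynomial (Fin 3) ℂ :=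
  ∑ i : Fin 3, C (L (Pi.single i 1)) * X i

lemma lpoly_homog (L : (Fin 3 → ℂ) →ₗ[ℂ] ℂ) : (lpoly L).IsHomogeneous 1 := by
  apply IsHomogeneous.sum
  intro i _
  simpa using (isHomogeneous_C _ (L (Pi.single i 1))).mul (isHomogeneous_X _ i)

lemma lpoly_eval (L : (Fin 3 → ℂ) →ₗ[ℂ] ℂ) (v : Fin 3 → ℂ) :
    eval v (lpoly L) = L v := by
  have : v = ∑ i : Fin 3, v i • (Pi.single i 1 : Fin 3 → ℂ) := by
    ext j; simp [Pi.single_apply]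
  rw [lpoly]
  conv_rhs => rw [this]
  simp [map_sum, mul_comm]

lemma dual_sep {u v w : Fin 3 → ℂ} (h : w ∉ Submodule.span ℂ {u, v}) :
    ∃ L : (Fin 3 → ℂ) →ₗ[ℂ] ℂ, L u = 0 ∧ L v = 0 ∧ L w ≠ 0 := by
  obtain ⟨f, hf, hf'⟩ := Submodule.exists_dual_map_eq_bot_of_notMem h inferInstance
  refine ⟨f, ?_, ?_, hf⟩
  · have : f u ∈ (Submodule.span ℂ {u, v}).map f :=
      ⟨u, Submodule.subset_span (by simp), rfl⟩
    simpa [hf'] using this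
  · have : f v ∈ (Submodule.span ℂ {u, v}).map f :=
      ⟨v, Submodule.subset_span (by simp), rfl⟩
    simpa [hf'] using this

lemma nonmem_single {p₀ p : Projectivization ℂ (Fin 3 → ℂ)} (hp : p ≠ p₀) :
    p₀.rep ∉ Submodule.span ℂ {p.rep} := by
  intro hmem
  obtain ⟨a, ha⟩ := Submodule.mem_span_singleton.mp hmem
  have ha0 : a ≠ 0 := by
    rintro rfl; simpa [Projectivization.rep_nonzero p₀] using ha.symm
  apply hp
  rw [← p.mk_rep, ← p₀.mk_rep]
  exact (Projectivization.mk_eq_mk_iff ℂ _ _ _ _).mpr ⟨(Units.mk0 a ha0)⁻¹, by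
    simp only [← ha, Units.smul_def, Units.val_inv_eq_inv_val, Units.val_mk0, smul_smul,
      inv_mul_cancel₀ ha0, one_smul]⟩

lemma nonmem_pair {p₀ p q : Projectivization ℂ (Fin 3 → ℂ)}
    (hpq : p ≠ q)
    (h : ∀ L : (Fin 3 → ℂ) →ₗ[ℂ] ℂ, L ≠ 0 → L p₀.rep = 0 →
      L p.rep = 0 → L q.rep = 0 → p = q) :
    p₀.rep ∉ Submodule.span ℂ {p.rep, q.rep} := by
  intro hmem
  have hlt : Submodule.span ℂ {p.rep, q.rep} < ⊤ := by
    rw [lt_top_iff_ne_top]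
    intro htop
    have h3 : Module.finrank ℂ (Fin 3 → ℂ) = 3 := by simp
    have hle : Module.finrank ℂ (Submodule.span ℂ ({p.rep, q.rep} : Set (Fin 3 → ℂ))) ≤ 2 := by
      have := finrank_span_le_card (R := ℂ) ({p.rep, q.rep} : Set (Fin 3 → ℂ))
      refine this.trans ?_
      have : ({p.rep, q.rep} : Set (Fin 3 → ℂ)).toFinset ⊆ {p.rep, q.rep} := by
        intro x hx; simpa using (Set.mem_toFinset.mp hx)
      exact (Finset.card_le_card this).trans ((Finset.card_insert_le _ _).trans (by simp))
    rw [htop, finrank_top, h3] at hle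
    omega
  obtain ⟨f, hf0, hfbot⟩ := Submodule.exists_dual_map_eq_bot_of_lt_top hlt inferInstance
  have hker : ∀ x ∈ Submodule.span ℂ ({p.rep, q.rep} : Set (Fin 3 → ℂ)), f x = 0 := by
    intro x hx
    have : f x ∈ (Submodule.span ℂ ({p.rep, q.rep} : Set (Fin 3 → ℂ))).map f := ⟨x, hx, rfl⟩
    simpa [hfbot] using this
  exact hpq (h f hf0 (hker _ hmem)
    (hker _ (Submodule.subset_span (by simp)))
    (hker _ (Submodule.subset_span (by simp))))

theorem main_aux (p₀ : Projectivization ℂ (Fin 3 → ℂ)) :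
    ∀ n : ℕ, ∀ S : Finset (Projectivization ℂ (Fin 3 → ℂ)), S.card = n → p₀ ∉ S →
    (∀ L : (Fin 3 → ℂ) →ₗ[ℂ] ℂ, L ≠ 0 → L p₀.rep = 0 →
      ∀ p ∈ S, ∀ q ∈ S, L p.rep = 0 → L q.rep = 0 → p = q) →
    ∃ F : MvPolynomial (Fin 3) ℂ, F.IsHomogeneous ((n + 1) / 2) ∧
      (∀ p ∈ S, MvPolynomial.eval p.rep F = 0) ∧
      MvPolynomial.eval p₀.rep F ≠ 0 := by
  intro n
  induction n using Nat.strong_induction_on with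
  | _ n ih =>
  intro S hS hp₀ hline
  classical
  rcases n with _ | _ | m
  ·
    refine ⟨1, by simpa using isHomogeneous_one (Fin 3) ℂ, ?_, by simp⟩
    simp [Finset.card_eq_zero.mp hS]
  · obtain ⟨p, rfl⟩ := Finset.card_eq_one.mp hS
    have hp : p ≠ p₀ := by rintro rfl; simp at hp₀
    have hmem : p₀.rep ∉ Submodule.span ℂ {p.rep, p.rep} := by
      rw [Set.pair_eq_singleton]; exact nonmem_single hp
    obtain ⟨L, hLp, -, hLp₀⟩ := dual_sep hmem
    refine ⟨lpoly L, by simpa using lpoly_homog L, ?_, by simpa [lpoly_eval] using hLp₀⟩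
    intro x hx
    rw [Finset.mem_singleton] at hx
    subst hx
    simp [lpoly_eval, hLp]
  · obtain ⟨p, hp, q, hq, hpq⟩ := Finset.one_lt_card.mp (show 1 < S.card by omega)
    set S' := (S.erase p).erase q with hS'
    have hqe : q ∈ S.erase p := Finset.mem_erase.mpr ⟨Ne.symm hpq, hq⟩
    have hcard : S'.card = m := by
      rw [hS', Finset.card_erase_of_mem hqe, Finset.card_erase_of_mem hp, hS]; omega
    have hsub : ∀ x ∈ S', x ∈ S := fun x hx =>
      Finset.mem_of_mem_erase (Finset.mem_of_mem_erase hx)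
    obtain ⟨F', hF'h, hF'v, hF'0⟩ := ih m (by omega) S' hcard
      (fun h => hp₀ (hsub _ h))
      (fun L hL h0 a ha b hb hLa hLb => hline L hL h0 a (hsub _ ha) b (hsub _ hb) hLa hLb)
    obtain ⟨L, hLp, hLq, hLp₀⟩ := dual_sep (nonmem_pair hpq
      (fun L hL h0 hLp hLq => hline L hL h0 p hp q hq hLp hLq))
    refine ⟨lpoly L * F', ?_, ?_, ?_⟩
    · have := (lpoly_homog L).mul hF'h
      have harith : 1 + (m + 1) / 2 = (m + 2 + 1) / 2 := by omega
      rwa [harith] at this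
    · intro x hx
      rw [eval_mul]
      by_cases hxp : x = p
      · subst hxp; simp [lpoly_eval, hLp]
      by_cases hxq : x = q
      · subst hxq; simp [lpoly_eval, hLq]
      · have hx' : x ∈ S' := Finset.mem_erase.mpr ⟨hxq, Finset.mem_erase.mpr ⟨hxp, hx⟩⟩
        simp [hF'v x hx']
    · rw [eval_mul]
      exact mul_ne_zero (by simpa [lpoly_eval] using hLp₀) hF'0


/-- If `S` is a set of `n ≥ 2` points of `ℙ²(ℂ)` not containing `p₀`,
and every projective line through `p₀` contains at most one point of `S`, then there is
a homogeneous polynomial of degree `⌈n/2⌉` vanishing at every point of `S` but not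
at `p₀`. -/
theorem separating_polynomial_of_no_two_points_collinear_with_base
    (p₀ : Projectivization ℂ (Fin 3 → ℂ))
    (n : ℕ) (hn : 2 ≤ n)
    (S : Finset (Projectivization ℂ (Fin 3 → ℂ))) (hS : S.card = n)
    (hp₀ : p₀ ∉ S)
    (hline : ∀ L : (Fin 3 → ℂ) →ₗ[ℂ] ℂ, L ≠ 0 → L p₀.rep = 0 →
      ∀ p ∈ S, ∀ q ∈ S, L p.rep = 0 → L q.rep = 0 → p = q) :
    ∃ F : MvPolynomial (Fin 3) ℂ, F.IsHomogeneous ((n + 1) / 2) ∧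
      (∀ p ∈ S, MvPolynomial.eval p.rep F = 0) ∧
      MvPolynomial.eval p₀.rep F ≠ 0 := by
  exact main_aux p₀ n S hS hp₀ hline
end

section
/- Let ℓ ⊂ ℙ²(ℂ) be a projective line, let p₀ ∈ ℓ, let A be a finite nonempty subset of ℓ \ {p₀}, and let B be a finite nonempty subset of ℙ²(ℂ) disjoint from ℓ. Then there exists a homogeneous polynomial F of degree max(|A|, |B|) in ℂ[X₀, X₁, X₂], a product of linear forms, that vanishes at every point of A ∪ B but does not vanish at p₀. -/
open MvPolynomial

private lemma aux_dual (S : Submodule ℂ (Fin 3 → ℂ)) (v : Fin 3 → ℂ) (hv : v ∉ S) :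
    ∃ φ : (Fin 3 → ℂ) →ₗ[ℂ] ℂ, (∀ x ∈ S, φ x = 0) ∧ φ v ≠ 0 := by
  have h : S.mkQ v ≠ 0 := by
    simpa [Submodule.Quotient.mk_eq_zero] using hv
  obtain ⟨ψ, hψ⟩ : ∃ ψ : Module.Dual ℂ ((Fin 3 → ℂ) ⧸ S), ψ (S.mkQ v) ≠ 0 := by
    by_contra hcon
    push_neg at hcon
    exact h ((Module.forall_dual_apply_eq_zero_iff ℂ _).mp hcon)
  exact ⟨ψ.comp S.mkQ, fun x hx => by simp [(Submodule.Quotient.mk_eq_zero S).mpr hx], hψ⟩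

private lemma aux_poly (φ : (Fin 3 → ℂ) →ₗ[ℂ] ℂ) :
    ∃ P : MvPolynomial (Fin 3) ℂ, P.IsHomogeneous 1 ∧ ∀ v, eval v P = φ v := by
  refine ⟨∑ i : Fin 3, C (φ (fun j => if i = j then 1 else 0)) * X i, ?_, ?_⟩
  · apply IsHomogeneous.sum
    intro i _
    simpa using (isHomogeneous_X ℂ i).C_mul (φ fun j => if i = j then 1 else 0)
  · intro v
    rw [LinearMap.pi_apply_eq_sum_univ]
    simp [mul_comm]

private lemma aux_span (L : (Fin 3 → ℂ) →ₗ[ℂ] ℂ)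
    (p₀ a b : Projectivization ℂ (Fin 3 → ℂ)) (hp₀ : L p₀.rep = 0)
    (ha : L a.rep = 0) (hab : a ≠ p₀) (hb : L b.rep ≠ 0) :
    p₀.rep ∉ Submodule.span ℂ {a.rep, b.rep} := by
  intro h
  rw [Submodule.mem_span_pair] at h
  obtain ⟨α, β, hαβ⟩ := h
  have hβ : β = 0 := by
    have := congrArg L hαβ
    simp [ha, hp₀, hb] at this
    tauto
  subst hβ
  simp at hαβ
  have hα : α ≠ 0 := by
    rintro rfl; exact p₀.rep_nonzero (by simp [← hαβ])
  apply hab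
  have h1 : Projectivization.mk ℂ (α • a.rep) (by simp [hα, a.rep_nonzero]) =
      Projectivization.mk ℂ a.rep a.rep_nonzero := by
    rw [Projectivization.mk_eq_mk_iff]
    exact ⟨Units.mk0 α hα, rfl⟩
  have h2 : Projectivization.mk ℂ (α • a.rep) (by simp [hα, a.rep_nonzero]) =
      Projectivization.mk ℂ p₀.rep p₀.rep_nonzero := by
    congr 1
  rw [h1] at h2
  simpa [Projectivization.mk_rep] using h2

/-- combined: for suitable a, b there is a linear (degree-1 homogeneous) polynomial
vanishing at a.rep and b.rep but not at p₀.rep -/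
private lemma aux_line (L : (Fin 3 → ℂ) →ₗ[ℂ] ℂ)
    (p₀ a b : Projectivization ℂ (Fin 3 → ℂ)) (hp₀ : L p₀.rep = 0)
    (ha : L a.rep = 0) (hab : a ≠ p₀) (hb : L b.rep ≠ 0) :
    ∃ P : MvPolynomial (Fin 3) ℂ, P.IsHomogeneous 1 ∧
      eval a.rep P = 0 ∧ eval b.rep P = 0 ∧ eval p₀.rep P ≠ 0 := by
  obtain ⟨φ, hφ0, hφv⟩ := aux_dual (Submodule.span ℂ {a.rep, b.rep}) p₀.rep
    (aux_span L p₀ a b hp₀ ha hab hb)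
  obtain ⟨P, hP1, hPe⟩ := aux_poly φ
  refine ⟨P, hP1, ?_, ?_, ?_⟩
  · rw [hPe]; exact hφ0 _ (Submodule.subset_span (by simp))
  · rw [hPe]; exact hφ0 _ (Submodule.subset_span (by simp))
  · rw [hPe]; exact hφv


/-- Let `ℓ ⊂ ℙ²(ℂ)` be the projective line cut out by a nonzero linear
form `L`, let `p₀ ∈ ℓ`, let `A` be a finite nonempty subset of `ℓ \ {p₀}`, and let `B`
be a finite nonempty set of points off `ℓ`. Then there is a homogeneous polynomial of
degree `max |A| |B|`, a product of linear forms, vanishing on `A ∪ B` but not at `p₀`. -/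
theorem product_of_linear_forms_separating_point_on_line
    (L : (Fin 3 → ℂ) →ₗ[ℂ] ℂ) (hL : L ≠ 0)
    (p₀ : Projectivization ℂ (Fin 3 → ℂ)) (hp₀ : L p₀.rep = 0)
    (A B : Finset (Projectivization ℂ (Fin 3 → ℂ)))
    (hA : A.Nonempty) (hAline : ∀ p ∈ A, L p.rep = 0 ∧ p ≠ p₀)
    (hB : B.Nonempty) (hBline : ∀ p ∈ B, L p.rep ≠ 0) :
    ∃ F : MvPolynomial (Fin 3) ℂ, F.IsHomogeneous (max A.card B.card) ∧
      (∃ G : Multiset (MvPolynomial (Fin 3) ℂ),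
        (∀ g ∈ G, MvPolynomial.IsHomogeneous g 1) ∧ F = G.prod) ∧
      (∀ p, p ∈ A ∨ p ∈ B → MvPolynomial.eval p.rep F = 0) ∧
      MvPolynomial.eval p₀.rep F ≠ 0 := by
  classical
  -- choose for each (a, b) ∈ A × B a linear form
  have key : ∀ (a : {x // x ∈ A}) (b : {x // x ∈ B}),
      ∃ P : MvPolynomial (Fin 3) ℂ, P.IsHomogeneous 1 ∧
        eval (a : Projectivization ℂ (Fin 3 → ℂ)).rep P = 0 ∧
        eval (b : Projectivization ℂ (Fin 3 → ℂ)).rep P = 0 ∧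
        eval p₀.rep P ≠ 0 := by
    intro a b
    exact aux_line L p₀ a b hp₀ (hAline a a.2).1 (hAline a a.2).2 (hBline b b.2)
  choose pol hpol1 hpolA hpolB hpol0 using key
  haveI : Nonempty {x // x ∈ A} := ⟨⟨hA.choose, hA.choose_spec⟩⟩
  haveI : Nonempty {x // x ∈ B} := ⟨⟨hB.choose, hB.choose_spec⟩⟩
  rcases le_or_gt B.card A.card with hc | hc
  · -- |B| ≤ |A| : surjection A → B
    obtain ⟨g⟩ : Nonempty ({x // x ∈ B} ↪ {x // x ∈ A}) := by
      rw [Function.Embedding.nonempty_iff_card_le]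
      simpa [Fintype.card_coe] using hc
    set f : {x // x ∈ A} → {x // x ∈ B} := Function.invFun g with hf
    have hfg : ∀ b, f (g b) = b := Function.leftInverse_invFun g.injective
    refine ⟨∏ a : {x // x ∈ A}, pol a (f a), ?_, ?_, ?_, ?_⟩
    · have := IsHomogeneous.prod Finset.univ (fun a => pol a (f a)) (fun _ => 1)
        (fun a _ => hpol1 a (f a))
      simpa [Fintype.card_coe, max_eq_left hc] using this
    · refine ⟨Finset.univ.val.map (fun a => pol a (f a)), ?_, ?_⟩
      · intro gP hgP
        obtain ⟨a, _, rfl⟩ := Multiset.mem_map.mp hgP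
        exact hpol1 a (f a)
      · rfl
    · intro p hp
      rw [map_prod]
      rcases hp with hp | hp
      · refine Finset.prod_eq_zero (Finset.mem_univ (⟨p, hp⟩ : {x // x ∈ A})) ?_
        exact hpolA ⟨p, hp⟩ (f ⟨p, hp⟩)
      · refine Finset.prod_eq_zero (Finset.mem_univ (g ⟨p, hp⟩)) ?_
        rw [hfg]
        exact hpolB (g ⟨p, hp⟩) ⟨p, hp⟩
    · rw [map_prod]
      exact Finset.prod_ne_zero_iff.mpr fun a _ => hpol0 a (f a)
  · -- |A| < |B| : surjection B → A
    obtain ⟨g⟩ : Nonempty ({x // x ∈ A} ↪ {x // x ∈ B}) := by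
      rw [Function.Embedding.nonempty_iff_card_le]
      simpa [Fintype.card_coe] using hc.le
    set f : {x // x ∈ B} → {x // x ∈ A} := Function.invFun g with hf
    have hfg : ∀ a, f (g a) = a := Function.leftInverse_invFun g.injective
    refine ⟨∏ b : {x // x ∈ B}, pol (f b) b, ?_, ?_, ?_, ?_⟩
    · have := IsHomogeneous.prod Finset.univ (fun b => pol (f b) b) (fun _ => 1)
        (fun b _ => hpol1 (f b) b)
      simpa [Fintype.card_coe, max_eq_right hc.le] using this
    · refine ⟨Finset.univ.val.map (fun b => pol (f b) b), ?_, ?_⟩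
      · intro gP hgP
        obtain ⟨b, _, rfl⟩ := Multiset.mem_map.mp hgP
        exact hpol1 (f b) b
      · rfl
    · intro p hp
      rw [map_prod]
      rcases hp with hp | hp
      · refine Finset.prod_eq_zero (Finset.mem_univ (g ⟨p, hp⟩)) ?_
        rw [hfg]
        exact hpolA ⟨p, hp⟩ (g ⟨p, hp⟩)
      · refine Finset.prod_eq_zero (Finset.mem_univ (⟨p, hp⟩ : {x // x ∈ B})) ?_
        exact hpolB (f ⟨p, hp⟩) ⟨p, hp⟩
    · rw [map_prod]
      exact Finset.prod_ne_zero_iff.mpr fun b _ => hpol0 (f b) b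
end
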